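/- Let E be a CPTN super-operator on L(H) and define sp(P) = supp(E(P)) for projectors P. Then sp preserves finite joins: sp(P ∨ Q) = sp(P) ∨ sp(Q) for all projectors P, Q, where ∨ is the closed linear span of subspaces. -/

import Mathlib

open Matrix
open scoped ComplexOrder

noncomputable section

/-- Löwner order: `A ⊑ B` iff `B - A` is positive semidefinite. -/
def Loewner {d : Type*} [Fintype d] (A B : Matrix d d ℂ) : Prop :=
  (B - A).PosSemidef

/-- An effect: a positive semidefinite operator bounded above by the identity. -/
def IsEffect {d : Type*} [Fintype d] [DecidableEq d] (M : Matrix d d ℂ) : Prop :=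
  M.PosSemidef ∧ (1 - M).PosSemidef

/-- A (partial) density operator: positive semidefinite with trace at most 1. -/
def IsDensity {d : Type*} [Fintype d] (ρ : Matrix d d ℂ) : Prop :=
  ρ.PosSemidef ∧ ρ.trace.re ≤ 1

/-- An orthogonal projector: Hermitian idempotent. -/
def IsProj {d : Type*} [Fintype d] (P : Matrix d d ℂ) : Prop :=
  P.IsHermitian ∧ P * P = P

-- Demonic expectation: `inf_{M ∈ Θ} tr(M ρ)`, with the convention that the
-- infimum over the empty set is `tr ρ`.
open Classical in
def demExp {d : Type*} [Fintype d] (Θ : Set (Matrix d d ℂ)) (ρ : Matrix d d ℂ) : ℝ :=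
  if Θ = ∅ then ρ.trace.re else sInf ((fun M => (M * ρ).trace.re) '' Θ)

/-- Angelic expectation: `sup_{M ∈ Θ} tr(M ρ)`; note `sSup ∅ = 0` in `ℝ`,
matching the convention that the supremum over the empty set is `0`. -/
def angExp {d : Type*} [Fintype d] (Θ : Set (Matrix d d ℂ)) (ρ : Matrix d d ℂ) : ℝ :=
  sSup ((fun M => (M * ρ).trace.re) '' Θ)

/-- The extension `I_{Fin m} ⊗ Φ` of a super-operator `Φ`, acting blockwise. -/
def tensorMap {n : ℕ} (Φ : Matrix (Fin n) (Fin n) ℂ → Matrix (Fin n) (Fin n) ℂ) (m : ℕ)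
    (A : Matrix (Fin m × Fin n) (Fin m × Fin n) ℂ) :
    Matrix (Fin m × Fin n) (Fin m × Fin n) ℂ :=
  fun p q => Φ (Matrix.of fun a b => A (p.1, a) (q.1, b)) p.2 q.2

/-- Complete positivity: every extension `I_K ⊗ Φ` maps positive semidefinite
matrices to positive semidefinite matrices. -/
def IsCP {n : ℕ} (Φ : Matrix (Fin n) (Fin n) ℂ → Matrix (Fin n) (Fin n) ℂ) : Prop :=
  ∀ (m : ℕ) (A : Matrix (Fin m × Fin n) (Fin m × Fin n) ℂ),
    A.PosSemidef → (tensorMap Φ m A).PosSemidef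

/-- Trace-nonincreasing on positive operators. -/
def IsTNI {n : ℕ} (Φ : Matrix (Fin n) (Fin n) ℂ → Matrix (Fin n) (Fin n) ℂ) : Prop :=
  ∀ A : Matrix (Fin n) (Fin n) ℂ, A.PosSemidef → (Φ A).trace.re ≤ A.trace.re

/-- Trace-preserving on positive operators. -/
def IsTP {n : ℕ} (Φ : Matrix (Fin n) (Fin n) ℂ → Matrix (Fin n) (Fin n) ℂ) : Prop :=
  ∀ A : Matrix (Fin n) (Fin n) ℂ, A.PosSemidef → (Φ A).trace = A.trace

/-- CPTN super-operator: linear, completely positive, and trace-nonincreasing. -/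
def IsCPTN {n : ℕ} (Φ : Matrix (Fin n) (Fin n) ℂ → Matrix (Fin n) (Fin n) ℂ) : Prop :=
  IsLinearMap ℂ Φ ∧ IsCP Φ ∧ IsTNI Φ

/-- The Choi matrix `J(Φ) = (Φ ⊗ I)(Ω)` of `Φ`, where `Ω` is the maximally
entangled state on `H ⊗ H`. -/
def choi {n : ℕ} (Φ : Matrix (Fin n) (Fin n) ℂ → Matrix (Fin n) (Fin n) ℂ) :
    Matrix (Fin n × Fin n) (Fin n × Fin n) ℂ :=
  fun p q => (1 / (n : ℂ)) * Φ (Matrix.single p.2 q.2 1) p.1 q.1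



lemma cp_psd {n : ℕ} {E : Matrix (Fin n) (Fin n) ℂ → Matrix (Fin n) (Fin n) ℂ}
    (hcp : IsCP E) {A : Matrix (Fin n) (Fin n) ℂ} (hA : A.PosSemidef) :
    (E A).PosSemidef := by
  have h1 : (A.submatrix (Prod.snd : Fin 1 × Fin n → Fin n) Prod.snd).PosSemidef :=
    hA.submatrix _
  have h3 := (hcp 1 _ h1).submatrix (fun i : Fin n => ((0 : Fin 1), i))
  exact h3

lemma trace_ctc_zero {n : ℕ} (C : Matrix (Fin n) (Fin n) ℂ) :
    (Cᴴ * C).trace = 0 ↔ C = 0 := by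
  constructor
  · intro h
    have hdiag : ∀ j, (Cᴴ * C) j j = 0 := by
      have hnn : ∀ j : Fin n, (0:ℂ) ≤ (Cᴴ * C) j j := by
        intro j
        simp only [Matrix.mul_apply, conjTranspose_apply]
        exact Finset.sum_nonneg fun i _ => star_mul_self_nonneg _
      intro j
      have := (Finset.sum_eq_zero_iff_of_nonneg (fun i _ => hnn i)).mp ?_ j (Finset.mem_univ j)
      · exact this
      · exact h
    ext i j
    have h0 : (star (fun i => C i j)) ⬝ᵥ (fun i => C i j) = 0 := by
      have := hdiag j
      simpa [Matrix.mul_apply, dotProduct, conjTranspose_apply] using this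
    have := dotProduct_star_self_eq_zero.mp h0
    simpa using congrFun this i
  · intro h; simp [h]

open scoped MatrixOrder in
lemma posSemidef_iff_eq_transpose_mul_self {n : ℕ} {A : Matrix (Fin n) (Fin n) ℂ} :
    A.PosSemidef ↔ ∃ B : Matrix (Fin n) (Fin n) ℂ, A = Bᴴ * B :=
  ⟨fun h => CStarAlgebra.nonneg_iff_eq_star_mul_self.mp (nonneg_iff_posSemidef.mpr h),
    fun ⟨B, hB⟩ => hB ▸ posSemidef_conjTranspose_mul_self B⟩

lemma trace_psd_mul_zero {n : ℕ} {A B : Matrix (Fin n) (Fin n) ℂ}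
    (hA : A.PosSemidef) (hB : B.PosSemidef) :
    (A * B).trace = 0 ↔ A * B = 0 := by
  obtain ⟨A₁, rfl⟩ := posSemidef_iff_eq_transpose_mul_self.mp hA
  obtain ⟨B₁, rfl⟩ := posSemidef_iff_eq_transpose_mul_self.mp hB
  have key : ((A₁ * B₁ᴴ)ᴴ * (A₁ * B₁ᴴ)).trace = ((A₁ᴴ * A₁) * (B₁ᴴ * B₁)).trace := by
    rw [conjTranspose_mul, conjTranspose_conjTranspose]
    rw [show B₁ * A₁ᴴ * (A₁ * B₁ᴴ) = B₁ * (A₁ᴴ * A₁ * B₁ᴴ) by simp [Matrix.mul_assoc]]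
    rw [trace_mul_comm]
    simp [Matrix.mul_assoc]
  constructor
  · intro h
    have h0 : A₁ * B₁ᴴ = 0 := (trace_ctc_zero _).mp (key.trans h)
    calc A₁ᴴ * A₁ * (B₁ᴴ * B₁) = A₁ᴴ * (A₁ * B₁ᴴ) * B₁ := by simp [Matrix.mul_assoc]
      _ = 0 := by rw [h0]; simp
  · intro h; rw [h, trace_zero]

lemma proj_psd {n : ℕ} {P : Matrix (Fin n) (Fin n) ℂ} (hP : IsProj P) : P.PosSemidef :=
  posSemidef_iff_eq_transpose_mul_self.mpr ⟨P, by rw [hP.1.eq, hP.2]⟩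

lemma mul_eq_zero_iff_mulVec {n : ℕ} {M σ : Matrix (Fin n) (Fin n) ℂ} :
    M * σ = 0 ↔ ∀ w : Fin n → ℂ, M.mulVec (σ.mulVec w) = 0 := by
  constructor
  · intro h w
    rw [Matrix.mulVec_mulVec, h, Matrix.zero_mulVec]
  · intro h
    ext i j
    have := congrFun (h (Pi.single j 1)) i
    rw [Matrix.mulVec_mulVec] at this
    simpa [Matrix.mulVec_single] using this


theorem sp_preserves_joins {n : ℕ}
    (E : Matrix (Fin n) (Fin n) ℂ → Matrix (Fin n) (Fin n) ℂ)
    (hE : IsCPTN E)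
    (P Q J : Matrix (Fin n) (Fin n) ℂ)
    (hP : IsProj P) (hQ : IsProj Q) (hJ : IsProj J)
    -- `J` is the projector onto `P ∨ Q`: its kernel is `ker P ∩ ker Q`
    (hJc : ∀ v : Fin n → ℂ, J.mulVec v = 0 ↔ (P.mulVec v = 0 ∧ Q.mulVec v = 0)) :
    -- `supp(E(J)) = supp(E(P)) ∨ supp(E(Q))`, expressed via kernels
    ∀ v : Fin n → ℂ,
      (E J).mulVec v = 0 ↔ ((E P).mulVec v = 0 ∧ (E Q).mulVec v = 0) := by
  obtain ⟨hlin, hcp, -⟩ := hE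
  intro v
  let f : Matrix (Fin n) (Fin n) ℂ →ₗ[ℂ] ℂ :=
    { toFun := fun M => star v ⬝ᵥ (E M).mulVec v
      map_add' := fun A B => by
        simp only [hlin.map_add, Matrix.add_mulVec, dotProduct_add]
      map_smul' := fun c A => by
        simp only [hlin.map_smul, Matrix.smul_mulVec, dotProduct_smul, RingHom.id_apply,
          smul_eq_mul] }
  have hfnonneg : ∀ {M : Matrix (Fin n) (Fin n) ℂ}, M.PosSemidef → 0 ≤ f M :=
    fun hM => (cp_psd hcp hM).dotProduct_mulVec_nonneg v
  have hfzero : ∀ {M : Matrix (Fin n) (Fin n) ℂ}, M.PosSemidef →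
      (f M = 0 ↔ (E M).mulVec v = 0) :=
    fun hM => (cp_psd hcp hM).dotProduct_mulVec_zero_iff v
  let ρ : Matrix (Fin n) (Fin n) ℂ := Matrix.of fun i j => f (Matrix.single j i 1)
  have htr : ∀ M : Matrix (Fin n) (Fin n) ℂ, f M = (M * ρ).trace := by
    intro M
    calc f M = ∑ i, ∑ j, f (Matrix.single i j (M i j)) := by
          conv_lhs => rw [Matrix.matrix_eq_sum_single M]
          rw [map_sum]
          exact Finset.sum_congr rfl fun i _ => map_sum f _ _
      _ = ∑ i, ∑ j, M i j * ρ j i := by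
          refine Finset.sum_congr rfl fun i _ => Finset.sum_congr rfl fun j _ => ?_
          have : Matrix.single i j (M i j) = M i j • Matrix.single i j 1 := by
            rw [Matrix.smul_single, smul_eq_mul, mul_one]
          rw [this, f.map_smul, smul_eq_mul]
          rfl
      _ = (M * ρ).trace := by
          simp [Matrix.trace, Matrix.mul_apply, Matrix.diag]
  have hform : ∀ w : Fin n → ℂ, star w ⬝ᵥ ρ.mulVec w = f (Matrix.vecMulVec w (star w)) := by
    intro w
    rw [htr]
    simp only [Matrix.trace, Matrix.diag, Matrix.mul_apply, Matrix.vecMulVec_apply,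
      dotProduct, Matrix.mulVec]
    rw [Finset.sum_comm]
    refine Finset.sum_congr rfl fun k _ => ?_
    rw [Finset.mul_sum]
    refine Finset.sum_congr rfl fun i _ => ?_
    simp [Pi.star_apply]
    ring
  have hvmv : ∀ w : Fin n → ℂ, (Matrix.vecMulVec w (star w)).PosSemidef := by
    intro w
    refine .of_dotProduct_mulVec_nonneg ?_ ?_
    · ext i j
      simp [Matrix.conjTranspose_apply, Matrix.vecMulVec_apply, mul_comm]
    · intro x
      have : (Matrix.vecMulVec w (star w)).mulVec x = (star w ⬝ᵥ x) • w := by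
        ext i
        simp only [Matrix.mulVec, Matrix.vecMulVec_apply, dotProduct, Pi.smul_apply,
          smul_eq_mul, Finset.sum_mul]
        exact Finset.sum_congr rfl fun k _ => by ring
      rw [this, dotProduct_smul]
      have hsw : star x ⬝ᵥ w = star (star w ⬝ᵥ x) := by
        simp only [dotProduct, star_sum, star_mul', star_star, Pi.star_apply]
        exact Finset.sum_congr rfl fun i _ => by ring
      rw [smul_eq_mul, hsw]
      exact mul_star_self_nonneg _
  have hρform : ∀ w : Fin n → ℂ, 0 ≤ star w ⬝ᵥ ρ.mulVec w := fun w => by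
    rw [hform]; exact hfnonneg (hvmv w)
  let σ : Matrix (Fin n) (Fin n) ℂ := (1/2 : ℂ) • (ρ + ρᴴ)
  have hσ : σ.PosSemidef := by
    refine .of_dotProduct_mulVec_nonneg ?_ ?_
    · show σᴴ = σ
      simp only [σ, Matrix.conjTranspose_smul, Matrix.conjTranspose_add,
        Matrix.conjTranspose_conjTranspose]
      rw [add_comm]
      norm_num
    · intro x
      have h1 : star x ⬝ᵥ ρᴴ.mulVec x = star (star x ⬝ᵥ ρ.mulVec x) := by
        rw [Matrix.dotProduct_mulVec, ← Matrix.star_mulVec, star_dotProduct]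

      have h2 : star (star x ⬝ᵥ ρ.mulVec x) = star x ⬝ᵥ ρ.mulVec x := by
        have := hρform x
        rw [Complex.star_def, Complex.conj_eq_iff_im]
        exact ((Complex.le_def.mp this).2).symm
      have h3 : star x ⬝ᵥ σ.mulVec x = star x ⬝ᵥ ρ.mulVec x := by
        simp only [σ, Matrix.smul_mulVec, Matrix.add_mulVec, dotProduct_smul,
          dotProduct_add, h1, h2, smul_eq_mul]
        ring
      rw [h3]; exact hρform x
  have hσtr : ∀ M : Matrix (Fin n) (Fin n) ℂ, M.PosSemidef → (M * σ).trace = f M := by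
    intro M hM
    have hfr : star (f M) = f M := by
      have := hfnonneg hM
      rw [Complex.star_def, Complex.conj_eq_iff_im]
      exact ((Complex.le_def.mp this).2).symm
    have h1 : (M * ρᴴ).trace = star ((M * ρ).trace) := by
      rw [← Matrix.trace_conjTranspose, Matrix.conjTranspose_mul, hM.1.eq, trace_mul_comm]
    have : M * σ = (1/2 : ℂ) • (M * ρ + M * ρᴴ) := by
      simp only [σ, Matrix.mul_smul, Matrix.mul_add]
    rw [this, Matrix.trace_smul, Matrix.trace_add, h1, ← htr, hfr, smul_eq_mul]
    ring
  have hkey : ∀ M : Matrix (Fin n) (Fin n) ℂ, M.PosSemidef →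
      ((E M).mulVec v = 0 ↔ ∀ w, M.mulVec (σ.mulVec w) = 0) := by
    intro M hM
    rw [← hfzero hM, ← hσtr M hM, trace_psd_mul_zero hM hσ, mul_eq_zero_iff_mulVec]
  rw [hkey J (proj_psd hJ), hkey P (proj_psd hP), hkey Q (proj_psd hQ)]
  constructor
  · intro h
    exact ⟨fun w => ((hJc _).mp (h w)).1, fun w => ((hJc _).mp (h w)).2⟩
  · rintro ⟨h1, h2⟩ w
    exact (hJc _).mpr ⟨h1 w, h2 w⟩
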